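/- For the q = 3 model with J₀ = J and J₁ = J₂ = 0, the discriminant of the quadratic for the nonzero eigenvalues of the transfer matrix with rows (x, y, y²), (y, y², y³), (y², y³, y⁴) evaluated at y = 1 equals Δ = 12 + x² - 4x, and the per capita investment is l(β) = [3 + (12 - 3x)/√(12 - 4x + x²)] / (x + 2 + √(12 - 4x + x²)) with x = e^{-βJ}. In particular for J > 0, l(β) → (3 + √12)/(2 + √12) as β → ∞. -/

import Mathlib

open Real Filter

/-- The discriminant of the quadratic for the nonzero eigenvalues of the `q = 3`
transfer matrix with `J₀ = J`, `J₁ = J₂ = 0`, in variables `x = e^{-βJ}`,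
`y = e^{-βD/2}`. -/
noncomputable def q3DeltaCase3 (x y : ℝ) : ℝ :=
  x ^ 2 + 4 * y ^ 2 + 5 * y ^ 4 + 2 * y ^ 6 + y ^ 8 - 2 * x * y ^ 2 - 2 * x * y ^ 4

/-- The largest eigenvalue `λ = ½[x + y² + y⁴ + √Δ]`. -/
noncomputable def q3LamCase3 (x y : ℝ) : ℝ :=
  (1 / 2) * (x + y ^ 2 + y ^ 4 + Real.sqrt (q3DeltaCase3 x y))

/-- The closed-form per capita investment for this case, as a function of `x`. -/
noncomputable def q3InvCase3 (x : ℝ) : ℝ :=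
  (3 + (12 - 3 * x) / Real.sqrt (12 - 4 * x + x ^ 2)) /
    (x + 2 + Real.sqrt (12 - 4 * x + x ^ 2))

lemma q3Delta_pos (x : ℝ) : 0 < 12 - 4 * x + x ^ 2 := by nlinarith [sq_nonneg (x - 2)]

lemma q3_deriv (x : ℝ) :
    deriv (q3LamCase3 x) 1 = 3 + (12 - 3 * x) / Real.sqrt (12 - 4 * x + x ^ 2) := by
  have hpos := q3Delta_pos x
  have hg : HasDerivAt (fun y : ℝ => q3DeltaCase3 x y) (48 - 12 * x) 1 := by
    have h := (((((((hasDerivAt_pow 2 (1:ℝ)).const_mul (4:ℝ)).const_add (x^2)).add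
        ((hasDerivAt_pow 4 (1:ℝ)).const_mul (5:ℝ))).add
        ((hasDerivAt_pow 6 (1:ℝ)).const_mul (2:ℝ))).add (hasDerivAt_pow 8 (1:ℝ))).sub
        ((hasDerivAt_pow 2 (1:ℝ)).const_mul (2*x))).sub
        ((hasDerivAt_pow 4 (1:ℝ)).const_mul (2*x))
    refine h.congr_deriv ?_
    push_cast; ring
  have hg1 : q3DeltaCase3 x 1 = 12 - 4 * x + x ^ 2 := by
    simp [q3DeltaCase3]; ring
  have hne : q3DeltaCase3 x 1 ≠ 0 := by rw [hg1]; exact ne_of_gt hpos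
  have hsq : HasDerivAt (fun y : ℝ => Real.sqrt (q3DeltaCase3 x y))
      ((48 - 12 * x) / (2 * Real.sqrt (q3DeltaCase3 x 1))) 1 := hg.sqrt hne
  have hy2 : HasDerivAt (fun y : ℝ => y ^ 2) (2 : ℝ) 1 := by
    simpa using hasDerivAt_pow 2 (1:ℝ)
  have hy4 : HasDerivAt (fun y : ℝ => y ^ 4) (4 : ℝ) 1 := by
    simpa using hasDerivAt_pow 4 (1:ℝ)
  have hlam : HasDerivAt (q3LamCase3 x)
      ((1/2) * (0 + 2 + 4 + (48 - 12 * x) / (2 * Real.sqrt (q3DeltaCase3 x 1)))) 1 :=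
    ((((hasDerivAt_const (1:ℝ) x).add hy2).add hy4).add hsq).const_mul (1/2)
  rw [hlam.deriv, hg1]
  have hs : Real.sqrt (12 - 4 * x + x ^ 2) ≠ 0 := by
    positivity
  field_simp
  ring

/-- For the `q = 3` model with `J₀ = J`, `J₁ = J₂ = 0`: the discriminant at `y = 1`
equals `12 + x² - 4x`, the per capita investment
`l(β) = -(1/(βλ))·(∂λ/∂y)·(∂y/∂D)|_{D=0}` equals the stated closed form with
`x = e^{-βJ}`, and for `J > 0` it tends to `(3 + √12)/(2 + √12)` as `β → ∞`. -/
theorem q3_case3_investment (β J : ℝ) (hβ : β ≠ 0) :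
    (∀ x : ℝ, q3DeltaCase3 x 1 = 12 + x ^ 2 - 4 * x) ∧
    (-(1 / (β * q3LamCase3 (exp (-β * J)) 1)) *
        (deriv (q3LamCase3 (exp (-β * J))) 1 * (-(β / 2)))
      = q3InvCase3 (exp (-β * J))) ∧
    (0 < J → Tendsto (fun b : ℝ => q3InvCase3 (exp (-b * J))) atTop
      (nhds ((3 + Real.sqrt 12) / (2 + Real.sqrt 12)))) := by
  refine ⟨fun x => by simp [q3DeltaCase3]; ring, ?_, ?_⟩
  · set x := exp (-β * J) with hx
    have hxpos : 0 < x := exp_pos _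
    have hg1 : q3DeltaCase3 x 1 = 12 - 4 * x + x ^ 2 := by simp [q3DeltaCase3]; ring
    have hspos : 0 < Real.sqrt (12 - 4 * x + x ^ 2) := Real.sqrt_pos.2 (q3Delta_pos x)
    have hlam1 : q3LamCase3 x 1 = (1/2) * (x + 2 + Real.sqrt (12 - 4 * x + x ^ 2)) := by
      simp [q3LamCase3, hg1]; ring
    have hlampos : 0 < q3LamCase3 x 1 := by rw [hlam1]; positivity
    rw [q3_deriv, hlam1, q3InvCase3]
    have hden : x + 2 + Real.sqrt (12 - 4 * x + x ^ 2) ≠ 0 := by positivity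
    field_simp
  · intro hJ
    have hx0 : Tendsto (fun b : ℝ => exp (-b * J)) atTop (nhds 0) := by
      have : Tendsto (fun b : ℝ => -b * J) atTop atBot := by
        apply Tendsto.atBot_mul_const hJ
        exact tendsto_neg_atTop_atBot.comp tendsto_id |>.congr (fun _ => rfl)
      exact Real.tendsto_exp_atBot.comp this
    have hcont : ContinuousAt q3InvCase3 0 := by
      unfold q3InvCase3
      fun_prop (disch := positivity)
    have hval : q3InvCase3 0 = (3 + Real.sqrt 12) / (2 + Real.sqrt 12) := by
      simp only [q3InvCase3]
      norm_num [Real.div_sqrt]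
    rw [← hval]
    exact hcont.tendsto.comp hx0
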